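/- Let e ≥ 2, n ≥ 1, d ≥ 0, J = {1,…,e−1}, and let Z be the zigzag algebra of type A_{e−1} over ℤ with basis B_Z of size 4e−6. Let W_d = Z^{⊗d} ⋊ ℤS_d and let (λ,c) ∈ Λ(n,d) × J^n be a colored composition with d_j = Σ_{c_r=j} λ_r for each j ∈ J. Then the colored permutation module M_{λ,c} = alt_{λ,c} ⊗_{W_{λ,c}} e_{λ,c} W_d is a free ℤ-module of rank |S_d : S_λ| · 3^{d_1+d_{e−1}} · 4^{Σ_{j=2}^{e−2} d_j} when e > 2, and of rank |S_d : S_λ| · 2^{d_1} when e = 2. -/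

import Mathlib

open Finset

/-- Labels of the `ℤ`-basis of `e_j Z` for the zigzag algebra `Z` of type
`A_{e-1}`: `0 ↦ e_j`, `1 ↦ c e_j`, `2 ↦ a^{j,j-1}` (if `j ≥ 2`),
`3 ↦ a^{j,j+1}` (if `j+1 ≤ e-1`). -/
def allowedT (e j : ℕ) : Finset ℕ :=
  ({0, 1} : Finset ℕ) ∪ (if 2 ≤ j then ({2} : Finset ℕ) else ∅) ∪
    (if j + 1 ≤ e - 1 then ({3} : Finset ℕ) else ∅)

/-- Index of the part of the composition `lam` (with `n` parts) containing the
0-based position `r < d`. -/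
def blockOf (n : ℕ) (lam : ℕ → ℕ) (r : ℕ) : ℕ :=
  ((Finset.range n).filter (fun t => (∑ t' ∈ Finset.range (t + 1), lam t') ≤ r)).card

section blockOf

variable {n d : ℕ} {lam : ℕ → ℕ}

def pref (lam : ℕ → ℕ) (t : ℕ) : ℕ := ∑ t' ∈ Finset.range t, lam t'

lemma pref_mono {lam : ℕ → ℕ} : Monotone (pref lam) := by
  intro a b hab
  exact Finset.sum_le_sum_of_subset (Finset.range_subset_range.2 hab)

private lemma downclosed_eq_range {F : Finset ℕ}
    (h2 : ∀ a b : ℕ, a ≤ b → b ∈ F → a ∈ F) : F = Finset.range F.card := by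
  have hsub : Finset.range F.card ⊆ F := by
    intro x hx
    rw [Finset.mem_range] at hx
    by_contra hxF
    have hFr : F ⊆ Finset.range x := by
      intro y hy
      rw [Finset.mem_range]
      by_contra hyx
      exact hxF (h2 x y (le_of_not_gt hyx) hy)
    have := Finset.card_le_card hFr
    simp only [Finset.card_range] at this
    omega
  exact (Finset.eq_of_subset_of_card_le hsub (by simp)).symm

lemma blockOf_filter_eq (r : ℕ) :
    (Finset.range n).filter (fun t => pref lam (t+1) ≤ r) =
      Finset.range (blockOf n lam r) := by
  have := downclosed_eq_range (F := (Finset.range n).filter (fun t => pref lam (t+1) ≤ r)) ?_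
  · exact this
  · intro a b hab hb
    simp only [Finset.mem_filter, Finset.mem_range] at hb ⊢
    exact ⟨lt_of_le_of_lt hab hb.1, le_trans (pref_mono (by omega)) hb.2⟩

lemma blockOf_spec (hn : 1 ≤ n) (hlam : pref lam n = d) {r : ℕ} (hr : r < d) :
    blockOf n lam r < n ∧ pref lam (blockOf n lam r) ≤ r ∧
      r < pref lam (blockOf n lam r) + lam (blockOf n lam r) := by
  set m := blockOf n lam r with hm
  have hF := blockOf_filter_eq (n := n) (lam := lam) (r := r)
  have hmem : ∀ t, (t < n ∧ pref lam (t+1) ≤ r) ↔ t < m := by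
    intro t
    constructor
    · rintro ⟨h1, h2⟩
      have : t ∈ Finset.range m := by
        rw [← hF]
        exact Finset.mem_filter.2 ⟨Finset.mem_range.2 h1, h2⟩
      simpa using this
    · intro h
      have : t ∈ (Finset.range n).filter (fun t => pref lam (t+1) ≤ r) := by
        rw [hF]; simpa using h
      simp only [Finset.mem_filter, Finset.mem_range] at this
      exact this
  have hmn : m ≤ n := by
    have h1 : m = ((Finset.range n).filter (fun t => pref lam (t+1) ≤ r)).card := by
      rw [hF]; simp [hm]
    rw [h1]
    exact le_trans (Finset.card_filter_le _ _) (by simp)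
  have hmltn : m < n := by
    rcases eq_or_lt_of_le hmn with h | h
    · exfalso
      have h2 := ((hmem (n-1)).2 (by omega)).2
      have hpn : pref lam (n-1+1) = d := by rw [← hlam]; congr 1; omega
      omega
    · exact h
  refine ⟨hmltn, ?_, ?_⟩
  · rcases Nat.eq_zero_or_pos m with h0 | h0
    · simp [h0, pref]
    · have h2 := ((hmem (m-1)).mpr (by omega)).2
      have he : m - 1 + 1 = m := by omega
      rwa [he] at h2
  · have h3 := (hmem m).not.mpr (by omega)
    push_neg at h3
    have h2 := h3 hmltn
    have h4 : pref lam (m+1) = pref lam m + lam m := Finset.sum_range_succ _ _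
    omega

lemma blockOf_eq_of (hn : 1 ≤ n) (hlam : pref lam n = d) {r t : ℕ} (hr : r < d)
    (ht : t < n) (h1 : pref lam t ≤ r) (h2 : r < pref lam t + lam t) :
    blockOf n lam r = t := by
  obtain ⟨hm1, hm2, hm3⟩ := blockOf_spec hn hlam hr (lam := lam)
  set m := blockOf n lam r
  rcases lt_trichotomy m t with h | h | h
  · exfalso
    have h5 : pref lam (m+1) ≤ pref lam t := pref_mono (by omega)
    have h6 : pref lam (m+1) = pref lam m + lam m := Finset.sum_range_succ _ _
    omega
  · exact h
  · exfalso
    have hle : pref lam (t+1) ≤ pref lam m := pref_mono (by omega)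
    have h6 : pref lam (t+1) = pref lam t + lam t := Finset.sum_range_succ _ _
    omega

lemma blockOf_mono {r s : ℕ} (hrs : r ≤ s) : blockOf n lam r ≤ blockOf n lam s := by
  unfold blockOf
  apply Finset.card_le_card
  intro t ht
  simp only [Finset.mem_filter, Finset.mem_range] at ht ⊢
  omega

lemma blockOf_lt (hn : 1 ≤ n) (hlam : pref lam n = d) {r : ℕ} (hr : r < d) :
    blockOf n lam r < n := (blockOf_spec hn hlam hr).1

/-- fiber cardinality -/
lemma card_fiber (hn : 1 ≤ n) (hlam : pref lam n = d) {t : ℕ} (ht : t < n) :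
    ((Finset.univ : Finset (Fin d)).filter (fun r : Fin d => blockOf n lam r.1 = t)).card
      = lam t := by
  have hiff : ∀ r : Fin d, blockOf n lam (r : ℕ) = t ↔
      (pref lam t ≤ (r : ℕ) ∧ (r : ℕ) < pref lam t + lam t) := by
    intro r
    constructor
    · intro h
      obtain ⟨_, h2, h3⟩ := blockOf_spec hn hlam r.2 (lam := lam)
      rw [h] at h2 h3
      exact ⟨h2, h3⟩
    · rintro ⟨h1, h2⟩
      exact blockOf_eq_of hn hlam r.2 ht h1 h2
  have hcard : ((Finset.univ : Finset (Fin d)).filter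
        (fun r : Fin d => blockOf n lam r.1 = t)).card
      = (Finset.Ico (pref lam t) (pref lam t + lam t)).card := by
    apply Finset.card_bij (fun (r : Fin d) _ => (r : ℕ))
    · intro a ha
      simp only [Finset.mem_filter, Finset.mem_univ, true_and] at ha
      simp only [Finset.mem_Ico]
      exact (hiff a).1 ha
    · intro a _ b _ hab
      exact Fin.ext hab
    · intro b hb
      simp only [Finset.mem_Ico] at hb
      have hub : pref lam t + lam t ≤ d := by
        have h7 : pref lam t + lam t = pref lam (t+1) := (Finset.sum_range_succ _ _).symm
        rw [h7, ← hlam]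
        exact pref_mono (by omega)
      refine ⟨⟨b, by omega⟩, ?_, rfl⟩
      simp only [Finset.mem_filter, Finset.mem_univ, true_and]
      exact (hiff ⟨b, by omega⟩).2 hb
  rw [hcard, Nat.card_Ico]
  omega

end blockOf


/-- Basis labels of `e_{λ,c} W_d` as a `ℤ`-module: a tuple of basis elements of
`e_{c_r} Z` (one for each tensor position, coloured by the part of `λ`
containing it) together with an element of `𝔖_d`. -/
def WBasisIdx (e n d : ℕ) (lam c : ℕ → ℕ) : Type :=
  {x : Fin d → ℕ // ∀ r : Fin d, x r ∈ allowedT e (c (blockOf n lam (r : ℕ)))} ×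
    Equiv.Perm (Fin d)

/-- Membership in the parabolic subgroup `𝔖_λ ≤ 𝔖_d`. -/
def MemSlam (n d : ℕ) (lam : ℕ → ℕ) (h : Equiv.Perm (Fin d)) : Prop :=
  ∀ r : Fin d, blockOf n lam ((h r : ℕ)) = blockOf n lam ((r : ℕ))

/-- The sign `ε_{λ,c}(h) = ∏_t ζ_{c_t}^{ℓ(h_t)}` (where `ζ_j = (-1)^{j+1}`):
`(-1)` to the number of inversions of `h` lying inside blocks of even colour. -/
def epsSign (n d : ℕ) (lam c : ℕ → ℕ) (h : Equiv.Perm (Fin d)) : ℤ :=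
  (-1) ^ ((Finset.univ.filter (fun p : Fin d × Fin d =>
      p.1 < p.2 ∧ blockOf n lam ((p.1 : ℕ)) = blockOf n lam ((p.2 : ℕ)) ∧
      Even (c (blockOf n lam ((p.1 : ℕ)))) ∧ h p.2 < h p.1)).card)

section eps

variable {n d : ℕ} {lam c : ℕ → ℕ}

lemma MemSlam.mul {σ τ : Equiv.Perm (Fin d)} (hσ : MemSlam n d lam σ)
    (hτ : MemSlam n d lam τ) : MemSlam n d lam (σ * τ) := by
  intro r
  rw [Equiv.Perm.mul_apply, hσ, hτ]

lemma MemSlam.one : MemSlam n d lam 1 := fun r => rfl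

lemma MemSlam.inv {σ : Equiv.Perm (Fin d)} (hσ : MemSlam n d lam σ) :
    MemSlam n d lam σ⁻¹ := by
  intro r
  conv_rhs => rw [← (show ∀ (σ : Equiv.Perm (Fin d)) (r : Fin d), σ (σ⁻¹ r) = r from fun σ r => σ.apply_symm_apply r) σ r]
  rw [hσ]

def Qset (n d : ℕ) (lam c : ℕ → ℕ) : Finset (Fin d × Fin d) :=
  Finset.univ.filter (fun p : Fin d × Fin d =>
    p.1 < p.2 ∧ blockOf n lam p.1.1 = blockOf n lam p.2.1 ∧
      Even (c (blockOf n lam p.1.1)))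

def gfun (σ : Equiv.Perm (Fin d)) (p : Fin d × Fin d) : ℤ :=
  if σ p.2 < σ p.1 then -1 else 1

lemma epsSign_eq_prod (σ : Equiv.Perm (Fin d)) :
    epsSign n d lam c σ = ∏ p ∈ Qset n d lam c, gfun σ p := by
  unfold epsSign Qset gfun
  rw [Finset.prod_ite, Finset.prod_const, Finset.prod_const, one_pow, mul_one,
    Finset.filter_filter]
  congr 1
  apply Finset.card_bij (fun p _ => p)
  · intro p hp
    simp only [Finset.mem_filter, Finset.mem_univ, true_and] at hp ⊢
    tauto
  · intro a b _ _ h; exact h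
  · intro p hp
    refine ⟨p, ?_, rfl⟩
    simp only [Finset.mem_filter, Finset.mem_univ, true_and] at hp ⊢
    tauto

def tauHat (τ : Equiv.Perm (Fin d)) (p : Fin d × Fin d) : Fin d × Fin d :=
  if τ p.1 < τ p.2 then (τ p.1, τ p.2) else (τ p.2, τ p.1)

lemma tauHat_mem {τ : Equiv.Perm (Fin d)} (hτ : MemSlam n d lam τ)
    {p : Fin d × Fin d} (hp : p ∈ Qset n d lam c) : tauHat τ p ∈ Qset n d lam c := by
  simp only [Qset, Finset.mem_filter, Finset.mem_univ, true_and] at hp ⊢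
  obtain ⟨h1, h2, h3⟩ := hp
  have hne : τ p.1 ≠ τ p.2 := fun h => absurd (τ.injective h) (ne_of_lt h1)
  unfold tauHat
  split_ifs with hlt
  · exact ⟨hlt, by rw [hτ, hτ]; exact h2, by rw [hτ]; exact h3⟩
  · refine ⟨lt_of_le_of_ne (not_lt.1 hlt) (Ne.symm hne), ?_, ?_⟩
    · rw [hτ, hτ]; exact h2.symm
    · rw [hτ, ← h2]; exact h3

lemma tauHat_tauHat {τ : Equiv.Perm (Fin d)} {p : Fin d × Fin d} (h1 : p.1 < p.2) :
    tauHat τ⁻¹ (tauHat τ p) = p := by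
  by_cases ha : τ p.1 < τ p.2
  · have h2 : tauHat τ p = (τ p.1, τ p.2) := if_pos ha
    rw [h2]
    simp [tauHat, h1]
  · have h2 : tauHat τ p = (τ p.2, τ p.1) := if_neg ha
    rw [h2]
    simp [tauHat, not_lt.2 h1.le]

lemma gfun_mul (σ τ : Equiv.Perm (Fin d)) {p : Fin d × Fin d} (h1 : p.1 < p.2) :
    gfun σ (tauHat τ p) * gfun τ p = gfun (σ * τ) p := by
  have hne : τ p.1 ≠ τ p.2 := fun h => absurd (τ.injective h) (ne_of_lt h1)
  have hne2 : σ (τ p.1) ≠ σ (τ p.2) := fun h => hne (σ.injective h)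
  by_cases ha : τ p.1 < τ p.2
  · have h2 : tauHat τ p = (τ p.1, τ p.2) := if_pos ha
    rw [h2]
    simp only [gfun]; rw [Equiv.Perm.mul_apply, Equiv.Perm.mul_apply]
    rw [if_neg (asymm ha), mul_one]
  · have ha' : τ p.2 < τ p.1 := (not_lt.1 ha).lt_of_ne (Ne.symm hne)
    have h2 : tauHat τ p = (τ p.2, τ p.1) := if_neg ha
    rw [h2]
    simp only [gfun]; rw [Equiv.Perm.mul_apply, Equiv.Perm.mul_apply]
    rw [if_pos ha']
    by_cases hb : σ (τ p.2) < σ (τ p.1)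
    · rw [if_neg (asymm hb), if_pos hb]
      norm_num
    · rw [if_pos ((not_lt.1 hb).lt_of_ne hne2), if_neg hb]
      norm_num

lemma epsSign_mul (σ τ : Equiv.Perm (Fin d)) (hτ : MemSlam n d lam τ) :
    epsSign n d lam c (σ * τ) = epsSign n d lam c σ * epsSign n d lam c τ := by
  rw [epsSign_eq_prod, epsSign_eq_prod, epsSign_eq_prod]
  have h1 : ∀ p ∈ Qset n d lam c, gfun (σ * τ) p = gfun σ (tauHat τ p) * gfun τ p := by
    intro p hp
    have hp1 : p.1 < p.2 := by
      simp only [Qset, Finset.mem_filter, Finset.mem_univ, true_and] at hp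
      exact hp.1
    exact (gfun_mul σ τ hp1).symm
  calc ∏ p ∈ Qset n d lam c, gfun (σ * τ) p
      = ∏ p ∈ Qset n d lam c, (gfun σ (tauHat τ p) * gfun τ p) :=
        Finset.prod_congr rfl h1
    _ = (∏ p ∈ Qset n d lam c, gfun σ (tauHat τ p)) *
          ∏ p ∈ Qset n d lam c, gfun τ p := Finset.prod_mul_distrib
    _ = (∏ p ∈ Qset n d lam c, gfun σ p) * ∏ p ∈ Qset n d lam c, gfun τ p := by
        congr 1
        apply Finset.prod_bij' (fun p _ => tauHat τ p) (fun p _ => tauHat τ⁻¹ p)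
        · intro p hp; exact tauHat_mem hτ hp
        · intro p hp; exact tauHat_mem hτ.inv hp
        · intro p hp
          apply tauHat_tauHat
          simp only [Qset, Finset.mem_filter, Finset.mem_univ, true_and] at hp
          exact hp.1
        · intro p hp
          have hp1 : p.1 < p.2 := by
            simp only [Qset, Finset.mem_filter, Finset.mem_univ, true_and] at hp
            exact hp.1
          conv_lhs => rw [show τ = (τ⁻¹)⁻¹ by simp]
          exact tauHat_tauHat hp1
        · intro p _; rfl

lemma epsSign_one : epsSign n d lam c 1 = 1 := by
  unfold epsSign
  convert pow_zero (-1 : ℤ)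
  rw [Finset.card_eq_zero]
  ext p
  simp only [Finset.mem_filter, Finset.mem_univ, true_and, Finset.notMem_empty, iff_false]
  rintro ⟨h1, _, _, h4⟩
  simp only [Equiv.Perm.one_apply] at h4
  exact absurd h1 (not_lt.2 (le_of_lt h4))

lemma epsSign_mul_self (σ : Equiv.Perm (Fin d)) :
    epsSign n d lam c σ * epsSign n d lam c σ = 1 := by
  unfold epsSign
  rw [← pow_add]
  exact Even.neg_one_pow ⟨_, rfl⟩

end eps


section grp

variable (n d : ℕ) (lam : ℕ → ℕ)

def Hgrp : Subgroup (Equiv.Perm (Fin d)) where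
  carrier := {h | MemSlam n d lam h}
  mul_mem' := fun ha hb => ha.mul hb
  one_mem' := MemSlam.one
  inv_mem' := fun ha => ha.inv

lemma mem_Hgrp {g : Equiv.Perm (Fin d)} : g ∈ Hgrp n d lam ↔ MemSlam n d lam g := Iff.rfl

noncomputable def rho (g : Equiv.Perm (Fin d)) : Equiv.Perm (Fin d) :=
  (Quotient.out (QuotientGroup.mk (s := Hgrp n d lam) g⁻¹))⁻¹

variable {n d lam}

lemma rho_spec (g : Equiv.Perm (Fin d)) : MemSlam n d lam (g * (rho n d lam g)⁻¹) := by
  have h1 : (Quotient.out (QuotientGroup.mk (s := Hgrp n d lam) g⁻¹))⁻¹ * g⁻¹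
      ∈ Hgrp n d lam := by
    rw [← QuotientGroup.eq]
    exact QuotientGroup.out_eq' _
  have h2 := (Hgrp n d lam).inv_mem h1
  rw [mul_inv_rev, inv_inv, inv_inv] at h2
  rw [rho, inv_inv]
  exact (mem_Hgrp n d lam).1 h2

lemma rho_mul_left {h : Equiv.Perm (Fin d)} (hh : MemSlam n d lam h) (g : Equiv.Perm (Fin d)) :
    rho n d lam (h * g) = rho n d lam g := by
  have h1 : QuotientGroup.mk (s := Hgrp n d lam) (h * g)⁻¹ =
      QuotientGroup.mk (s := Hgrp n d lam) g⁻¹ := by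
    rw [QuotientGroup.eq]
    have h2 : ((h * g)⁻¹)⁻¹ * g⁻¹ = h := by group
    rw [h2]
    exact (mem_Hgrp n d lam).2 hh
  rw [rho, rho, h1]

lemma rho_rho (g : Equiv.Perm (Fin d)) : rho n d lam (rho n d lam g) = rho n d lam g := by
  conv_lhs => rw [rho]
  rw [rho, inv_inv, QuotientGroup.out_eq']

def CanonT (n d : ℕ) (lam : ℕ → ℕ) : Type := {g : Equiv.Perm (Fin d) // rho n d lam g = g}

noncomputable def canonEquiv : CanonT n d lam ≃ (Equiv.Perm (Fin d) ⧸ Hgrp n d lam) where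
  toFun g := QuotientGroup.mk g.1⁻¹
  invFun q := ⟨(Quotient.out q)⁻¹, by rw [rho, inv_inv, QuotientGroup.out_eq']⟩
  left_inv := by
    rintro ⟨g, hg⟩
    apply Subtype.ext
    simp only
    conv_rhs => rw [← hg]
    rw [rho]
  right_inv := by
    intro q
    simp only [inv_inv]
    exact QuotientGroup.out_eq' q

lemma card_Hgrp (hn : 1 ≤ n) (hlam : pref lam n = d) :
    Nat.card (Hgrp n d lam) = ∏ t ∈ Finset.range n, (lam t).factorial := by
  classical
  set f : Fin d → ℕ := fun r => blockOf n lam r.1 with hf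
  have he : ∀ g : Equiv.Perm (Fin d), g ∈ Hgrp n d lam ↔ f ∘ g = f := by
    intro g
    rw [mem_Hgrp, funext_iff]
    exact forall_congr' (fun r => Iff.rfl)
  have h1 : Nat.card (Hgrp n d lam) = Fintype.card {g : Equiv.Perm (Fin d) // f ∘ g = f} := by
    rw [Nat.card_eq_fintype_card]
    exact Fintype.card_congr (Equiv.subtypeEquivRight he)
  rw [h1, DomMulAct.stabilizer_card' f]
  have himg : Finset.univ.image f ⊆ Finset.range n := by
    intro i hi
    simp only [Finset.mem_image] at hi
    obtain ⟨r, _, rfl⟩ := hi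
    exact Finset.mem_range.2 (blockOf_lt hn hlam r.2)
  have hfib : ∀ t < n, Fintype.card {a : Fin d // f a = t} = lam t := by
    intro t ht
    rw [Fintype.card_subtype]
    exact card_fiber hn hlam ht
  have h2 : ∀ t ∈ Finset.range n, t ∉ Finset.univ.image f →
      (Fintype.card {a : Fin d // f a = t}).factorial = 1 := by
    intro t ht hnotin
    have h3 : Fintype.card {a : Fin d // f a = t} = 0 := by
      rw [Fintype.card_eq_zero_iff]
      constructor
      rintro ⟨r, hr⟩
      exact hnotin (Finset.mem_image.2 ⟨r, Finset.mem_univ r, hr⟩)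
    rw [h3]
    exact Nat.factorial_zero
  rw [Finset.prod_subset himg h2]
  exact Finset.prod_congr rfl (fun t ht => by rw [hfib t (Finset.mem_range.1 ht)])

lemma card_quotient (hn : 1 ≤ n) (hlam : pref lam n = d) :
    Nat.card (Equiv.Perm (Fin d) ⧸ Hgrp n d lam) = Nat.multinomial (Finset.range n) lam := by
  have hlag := Subgroup.card_eq_card_quotient_mul_card_subgroup (Hgrp n d lam)
  rw [card_Hgrp hn hlam] at hlag
  have hperm : Nat.card (Equiv.Perm (Fin d)) = d.factorial := by
    rw [Nat.card_eq_fintype_card, Fintype.card_perm, Fintype.card_fin]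
  rw [hperm] at hlag
  have hspec := Nat.multinomial_spec (Finset.range n) lam
  have hsum : ∑ t ∈ Finset.range n, lam t = d := hlam
  rw [hsum] at hspec
  have hpos : 0 < ∏ t ∈ Finset.range n, (lam t).factorial :=
    Finset.prod_pos (fun t _ => Nat.factorial_pos _)
  have h4 : Nat.card (Equiv.Perm (Fin d) ⧸ Hgrp n d lam) * (∏ t ∈ Finset.range n, (lam t).factorial)
      = Nat.multinomial (Finset.range n) lam * (∏ t ∈ Finset.range n, (lam t).factorial) := by
    rw [← hlag, mul_comm]
    exact hspec.symm
  exact Nat.eq_of_mul_eq_mul_right hpos h4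

lemma card_CanonT (hn : 1 ≤ n) (hlam : pref lam n = d) :
    Nat.card (CanonT n d lam) = Nat.multinomial (Finset.range n) lam := by
  rw [Nat.card_congr (canonEquiv (n := n) (d := d) (lam := lam)), card_quotient hn hlam]

end grp


/-- The submodule of relations defining
`M_{λ,c} = alt_{λ,c} ⊗_{W_{λ,c}} e_{λ,c} W_d` as a quotient of the free
`ℤ`-module on `WBasisIdx`: for `h ∈ 𝔖_λ`, the left action
`h·(x ⊗ g) = (x ∘ h⁻¹) ⊗ hg` is identified with multiplication by `ε(h)`. -/
noncomputable def altRelations (e n d : ℕ) (lam c : ℕ → ℕ) :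
    Submodule ℤ (WBasisIdx e n d lam c →₀ ℤ) :=
  Submodule.span ℤ
    {y | ∃ h : Equiv.Perm (Fin d), MemSlam n d lam h ∧
      ∃ x x' : {x : Fin d → ℕ //
          ∀ r : Fin d, x r ∈ allowedT e (c (blockOf n lam (r : ℕ)))},
      ∃ g : Equiv.Perm (Fin d),
        (∀ r : Fin d, x'.1 r = x.1 (h⁻¹ r)) ∧
        y = epsSign n d lam c h • Finsupp.single ((x', h * g) : WBasisIdx e n d lam c) (1 : ℤ)
              - Finsupp.single ((x, g) : WBasisIdx e n d lam c) (1 : ℤ)}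

section module

variable (e n d : ℕ) (lam c : ℕ → ℕ)

abbrev XT : Type :=
  {x : Fin d → ℕ // ∀ r : Fin d, x r ∈ allowedT e (c (blockOf n lam (r : ℕ)))}

noncomputable instance : Fintype (XT e n d lam c) :=
  Fintype.ofEquiv _ (Equiv.subtypePiEquivPi
    (p := fun (r : Fin d) (b : ℕ) => b ∈ allowedT e (c (blockOf n lam (r : ℕ))))).symm

instance : Finite (CanonT n d lam) := by unfold CanonT; infer_instance

noncomputable instance : Fintype (CanonT n d lam) := Fintype.ofFinite _

abbrev BT : Type := XT e n d lam c × CanonT n d lam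

variable {e n d lam c}

/-- the shifted tuple -/
def xshift (x : XT e n d lam c) {h : Equiv.Perm (Fin d)} (hh : MemSlam n d lam h) :
    XT e n d lam c :=
  ⟨fun r => x.1 (h r), by
    intro r
    have h2 := x.2 (h r)
    rwa [hh r] at h2⟩

noncomputable def fB (w : WBasisIdx e n d lam c) : BT e n d lam c →₀ ℤ :=
  epsSign n d lam c (w.2 * (rho n d lam w.2)⁻¹) •
    Finsupp.single (xshift w.1 (rho_spec w.2), ⟨rho n d lam w.2, rho_rho w.2⟩) 1

noncomputable def Fmap : (WBasisIdx e n d lam c →₀ ℤ) →ₗ[ℤ] (BT e n d lam c →₀ ℤ) :=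
  Finsupp.lift _ ℤ _ fB

lemma Fmap_single (w : WBasisIdx e n d lam c) :
    Fmap (Finsupp.single w (1 : ℤ)) = fB w := by
  unfold Fmap
  rw [Finsupp.lift_apply, Finsupp.sum_single_index (by simp), one_smul]

lemma fB_rel {h : Equiv.Perm (Fin d)} (hh : MemSlam n d lam h)
    (x x' : XT e n d lam c) (g : Equiv.Perm (Fin d))
    (hx' : ∀ r : Fin d, x'.1 r = x.1 (h⁻¹ r)) :
    fB ((x', h * g) : WBasisIdx e n d lam c) =
      epsSign n d lam c h • fB ((x, g) : WBasisIdx e n d lam c) := by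
  have hrho : rho n d lam (h * g) = rho n d lam g := rho_mul_left hh g
  have hδ' : (h * g) * (rho n d lam (h * g))⁻¹ = h * (g * (rho n d lam g)⁻¹) := by
    rw [hrho, mul_assoc]
  have hidx : ((xshift x' (rho_spec (h * g)),
        ⟨rho n d lam (h * g), rho_rho (h * g)⟩) : BT e n d lam c)
      = (xshift x (rho_spec g), ⟨rho n d lam g, rho_rho g⟩) := by
    refine Prod.ext ?_ ?_
    · apply Subtype.ext
      funext r
      show x'.1 ((h * g * (rho n d lam (h * g))⁻¹) r) = x.1 ((g * (rho n d lam g)⁻¹) r)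
      rw [hδ', Equiv.Perm.mul_apply, hx', (show ∀ (σ : Equiv.Perm (Fin d)) (r : Fin d), σ⁻¹ (σ r) = r from fun σ r => σ.symm_apply_apply r)]
    · exact Subtype.ext hrho
  have hcoef : epsSign n d lam c (h * g * (rho n d lam (h * g))⁻¹)
      = epsSign n d lam c h * epsSign n d lam c (g * (rho n d lam g)⁻¹) := by
    rw [hδ']
    exact epsSign_mul _ _ (rho_spec g)
  calc fB ((x', h * g) : WBasisIdx e n d lam c)
      = epsSign n d lam c (h * g * (rho n d lam (h * g))⁻¹) •
          Finsupp.single ((xshift x (rho_spec g), ⟨rho n d lam g, rho_rho g⟩) :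
            BT e n d lam c) (1 : ℤ) :=
        congrArg (fun b : BT e n d lam c =>
          epsSign n d lam c (h * g * (rho n d lam (h * g))⁻¹) •
            Finsupp.single b (1 : ℤ)) hidx
    _ = epsSign n d lam c h • fB ((x, g) : WBasisIdx e n d lam c) := by
        rw [hcoef, mul_smul]
        rfl

lemma relations_le_ker :
    altRelations e n d lam c ≤ LinearMap.ker (Fmap (e := e) (n := n) (d := d) (lam := lam) (c := c)) := by
  rw [altRelations, Submodule.span_le]
  rintro y ⟨h, hh, x, x', g, hx', rfl⟩
  show Fmap (epsSign n d lam c h • Finsupp.single (α := WBasisIdx e n d lam c) (x', h * g) (1 : ℤ)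
    - Finsupp.single (α := WBasisIdx e n d lam c) (x, g) (1 : ℤ)) = 0
  rw [map_sub, map_smul]
  erw [Fmap_single, Fmap_single]
  rw [fB_rel hh x x' g hx', smul_smul, epsSign_mul_self, one_smul,
    sub_self]

end module
section equiv5

variable {e n d : ℕ} {lam c : ℕ → ℕ}

noncomputable def Fq : ((WBasisIdx e n d lam c →₀ ℤ) ⧸ altRelations e n d lam c) →ₗ[ℤ]
    (BT e n d lam c →₀ ℤ) :=
  Submodule.liftQ _ Fmap relations_le_ker

noncomputable def Gq : (BT e n d lam c →₀ ℤ) →ₗ[ℤ]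
    ((WBasisIdx e n d lam c →₀ ℤ) ⧸ altRelations e n d lam c) :=
  Finsupp.lift _ ℤ _ (fun b => Submodule.Quotient.mk
    (Finsupp.single ((b.1, b.2.1) : WBasisIdx e n d lam c) (1 : ℤ)))

lemma Gq_single (b : BT e n d lam c) :
    Gq (Finsupp.single b (1 : ℤ)) =
      Submodule.Quotient.mk
        (Finsupp.single ((b.1, b.2.1) : WBasisIdx e n d lam c) (1 : ℤ)) := by
  unfold Gq
  rw [Finsupp.lift_apply, Finsupp.sum_single_index (by simp), one_smul]
  rfl

lemma Fq_mk (y : WBasisIdx e n d lam c →₀ ℤ) :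
    Fq (Submodule.Quotient.mk y) = Fmap y := rfl

lemma fB_canon (b : BT e n d lam c) :
    fB ((b.1, b.2.1) : WBasisIdx e n d lam c) = Finsupp.single b 1 := by
  have h2 : rho n d lam b.2.1 = b.2.1 := b.2.2
  have hone : b.2.1 * (rho n d lam b.2.1)⁻¹ = 1 := by
    rw [h2, mul_inv_cancel]
  have hidx : ((xshift b.1 (rho_spec b.2.1),
        ⟨rho n d lam b.2.1, rho_rho b.2.1⟩) : BT e n d lam c) = b := by
    refine Prod.ext ?_ ?_
    · apply Subtype.ext
      funext r
      show b.1.1 ((b.2.1 * (rho n d lam b.2.1)⁻¹) r) = b.1.1 r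
      rw [hone]
      rfl
    · exact Subtype.ext h2
  calc fB ((b.1, b.2.1) : WBasisIdx e n d lam c)
      = epsSign n d lam c (b.2.1 * (rho n d lam b.2.1)⁻¹) • Finsupp.single b (1 : ℤ) :=
        congrArg (fun q : BT e n d lam c =>
          epsSign n d lam c (b.2.1 * (rho n d lam b.2.1)⁻¹) • Finsupp.single q (1 : ℤ)) hidx
    _ = Finsupp.single b 1 := by rw [hone, epsSign_one, one_smul]

lemma Fq_Gq : (Fq (e := e) (n := n) (d := d) (lam := lam) (c := c)).comp Gq = LinearMap.id := by
  apply Finsupp.lhom_ext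
  intro b z
  have h1 : Finsupp.single b z = z • Finsupp.single b (1 : ℤ) := by
    rw [Finsupp.smul_single, smul_eq_mul, mul_one]
  rw [LinearMap.comp_apply, LinearMap.id_apply, h1, map_smul, map_smul, Gq_single]
  erw [Fq_mk,
    Fmap_single, fB_canon]

lemma mk_rel {h : Equiv.Perm (Fin d)} (hh : MemSlam n d lam h)
    (x x' : XT e n d lam c) (g : Equiv.Perm (Fin d))
    (hx' : ∀ r : Fin d, x'.1 r = x.1 (h⁻¹ r)) :
    (epsSign n d lam c h •
      (Submodule.Quotient.mk
        (Finsupp.single ((x', h * g) : WBasisIdx e n d lam c) (1 : ℤ)) :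
        (WBasisIdx e n d lam c →₀ ℤ) ⧸ altRelations e n d lam c))
      = Submodule.Quotient.mk (Finsupp.single ((x, g) : WBasisIdx e n d lam c) (1 : ℤ)) := by
  show epsSign n d lam c h • (Submodule.Quotient.mk (p := altRelations e n d lam c)
      (Finsupp.single (α := WBasisIdx e n d lam c) (x', h * g) (1 : ℤ)))
    = Submodule.Quotient.mk (Finsupp.single (α := WBasisIdx e n d lam c) (x, g) (1 : ℤ))
  rw [← sub_eq_zero, ← Submodule.Quotient.mk_smul, ← Submodule.Quotient.mk_sub,
    Submodule.Quotient.mk_eq_zero]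
  exact Submodule.subset_span ⟨h, hh, x, x', g, hx', rfl⟩

lemma Gq_Fq : (Gq (e := e) (n := n) (d := d) (lam := lam) (c := c)).comp Fq = LinearMap.id := by
  apply Submodule.linearMap_qext
  apply Finsupp.lhom_ext
  intro w z
  have h1 : Finsupp.single w z = z • Finsupp.single w (1 : ℤ) := by
    rw [Finsupp.smul_single, smul_eq_mul, mul_one]
  rw [LinearMap.comp_apply, LinearMap.comp_apply, LinearMap.comp_apply, LinearMap.id_apply,
    h1, map_smul, map_smul, map_smul]
  congr 1
  have h2 : (Submodule.mkQ (altRelations e n d lam c)) (Finsupp.single w 1)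
      = Submodule.Quotient.mk (Finsupp.single w 1) := rfl
  rw [h2, Fq_mk, Fmap_single]
  -- fB w = eps δ • single bw 1
  show Gq (epsSign n d lam c (w.2 * (rho n d lam w.2)⁻¹) •
    Finsupp.single ((xshift w.1 (rho_spec w.2), ⟨rho n d lam w.2, rho_rho w.2⟩) :
      BT e n d lam c) (1 : ℤ)) = _
  rw [map_smul, Gq_single]
  have hrel := mk_rel (e := e) (c := c) (rho_spec w.2) (xshift w.1 (rho_spec w.2)) w.1
    (rho n d lam w.2) (fun r => by
      show w.1.1 r = (xshift w.1 (rho_spec w.2)).1 ((w.2 * (rho n d lam w.2)⁻¹)⁻¹ r)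
      show w.1.1 r = w.1.1 ((w.2 * (rho n d lam w.2)⁻¹) (((w.2 * (rho n d lam w.2)⁻¹))⁻¹ r))
      rw [(show ∀ (σ : Equiv.Perm (Fin d)) (r : Fin d), σ (σ⁻¹ r) = r from fun σ r => σ.apply_symm_apply r)])
  -- hrel : eps δ • mk single (w.1, δ * ρ) = mk single (xshift, ρ)
  have hδρ : (w.2 * (rho n d lam w.2)⁻¹) * rho n d lam w.2 = w.2 := by
    rw [inv_mul_cancel_right]
  rw [hδρ] at hrel
  rw [← hrel, smul_smul, epsSign_mul_self, one_smul]
  rfl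

noncomputable def theEquiv :
    ((WBasisIdx e n d lam c →₀ ℤ) ⧸ altRelations e n d lam c) ≃ₗ[ℤ]
      (BT e n d lam c →₀ ℤ) :=
  LinearEquiv.ofLinear Fq Gq Fq_Gq Gq_Fq

end equiv5
section count

variable {e n d : ℕ} {lam c : ℕ → ℕ}

lemma card_XT (hn : 1 ≤ n) (hlam : pref lam n = d) :
    Fintype.card (XT e n d lam c) =
      ∏ t ∈ Finset.range n, (allowedT e (c t)).card ^ lam t := by
  rw [Fintype.card_congr (Equiv.subtypePiEquivPi
    (p := fun (r : Fin d) (b : ℕ) => b ∈ allowedT e (c (blockOf n lam (r : ℕ)))))]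
  rw [Fintype.card_pi]
  have h1 : ∀ r : Fin d, Fintype.card {b // b ∈ allowedT e (c (blockOf n lam (r : ℕ)))}
      = (allowedT e (c (blockOf n lam (r : ℕ)))).card := fun r => Fintype.card_coe _
  rw [Finset.prod_congr rfl (fun r _ => h1 r)]
  rw [← Finset.prod_fiberwise_of_maps_to (g := fun r : Fin d => blockOf n lam (r : ℕ))
    (t := Finset.range n) (fun r _ => Finset.mem_range.2 (blockOf_lt hn hlam r.2))
    (fun r => (allowedT e (c (blockOf n lam (r : ℕ)))).card)]
  apply Finset.prod_congr rfl
  intro t ht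
  have h2 : ∀ r ∈ Finset.univ.filter (fun r : Fin d => blockOf n lam (r : ℕ) = t),
      (allowedT e (c (blockOf n lam (r : ℕ)))).card = (allowedT e (c t)).card := by
    intro r hr
    rw [(Finset.mem_filter.1 hr).2]
  rw [Finset.prod_congr rfl h2, Finset.prod_const, card_fiber hn hlam (Finset.mem_range.1 ht)]

lemma card_BT (hn : 1 ≤ n) (hlam : pref lam n = d) :
    Fintype.card (BT e n d lam c) =
      (∏ t ∈ Finset.range n, (allowedT e (c t)).card ^ lam t) *
        Nat.multinomial (Finset.range n) lam := by
  rw [Fintype.card_prod, card_XT hn hlam]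
  congr 1
  rw [← Nat.card_eq_fintype_card, card_CanonT hn hlam]

lemma card_allowedT_e2 : (allowedT 2 1).card = 2 := by decide

lemma card_allowedT_one (he : 3 ≤ e) : (allowedT e 1).card = 3 := by
  rw [allowedT, if_neg (by omega), if_pos (by omega)]
  decide

lemma card_allowedT_top (he : 3 ≤ e) : (allowedT e (e - 1)).card = 3 := by
  rw [allowedT, if_pos (by omega), if_neg (by omega)]
  decide

lemma card_allowedT_mid {j : ℕ} (h2 : 2 ≤ j) (h3 : j + 1 ≤ e - 1) :
    (allowedT e j).card = 4 := by
  rw [allowedT, if_pos h2, if_pos h3]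
  decide

end count

/-- The coloured permutation module
`M_{λ,c} = alt_{λ,c} ⊗_{W_{λ,c}} e_{λ,c} W_d` over the wreath product
`W_d = Z^{⊗d} ⋊ ℤ𝔖_d` of the type `A_{e-1}` zigzag algebra is a free
`ℤ`-module of rank `|𝔖_d : 𝔖_λ| · 3^{d_1 + d_{e-1}} · 4^{∑_{j=2}^{e-2} d_j}`
when `e > 2`, and of rank `|𝔖_d : 𝔖_λ| · 2^{d_1}` when `e = 2`,
where `d_j = ∑_{c_r = j} λ_r`. -/
theorem colored_permutation_module_rank
    (e n d : ℕ) (he : 2 ≤ e) (hn : 1 ≤ n)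
    (lam : ℕ → ℕ) (hlam : ∑ t ∈ Finset.range n, lam t = d)
    (c : ℕ → ℕ) (hc : ∀ t, t < n → 1 ≤ c t ∧ c t ≤ e - 1) :
    Module.Free ℤ
      ((WBasisIdx e n d lam c →₀ ℤ) ⧸ altRelations e n d lam c) ∧
    (2 < e →
      Module.finrank ℤ
          ((WBasisIdx e n d lam c →₀ ℤ) ⧸ altRelations e n d lam c) =
        Nat.multinomial (Finset.range n) lam *
          3 ^ ((∑ t ∈ (Finset.range n).filter (fun t => c t = 1), lam t) +
               (∑ t ∈ (Finset.range n).filter (fun t => c t = e - 1), lam t)) *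
          4 ^ (∑ j ∈ Finset.Icc 2 (e - 2),
                ∑ t ∈ (Finset.range n).filter (fun t => c t = j), lam t)) ∧
    (e = 2 →
      Module.finrank ℤ
          ((WBasisIdx e n d lam c →₀ ℤ) ⧸ altRelations e n d lam c) =
        Nat.multinomial (Finset.range n) lam *
          2 ^ (∑ t ∈ (Finset.range n).filter (fun t => c t = 1), lam t)) := by
  have hlam' : pref lam n = d := hlam
  refine ⟨Module.Free.of_equiv (theEquiv (e := e) (n := n) (d := d) (lam := lam) (c := c)).symm,
    ?_, ?_⟩
  · intro he3
    rw [LinearEquiv.finrank_eq (theEquiv (e := e) (n := n) (d := d) (lam := lam) (c := c)),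
      Module.finrank_finsupp_self, card_BT hn hlam']
    have key : ∏ t ∈ Finset.range n, (allowedT e (c t)).card ^ lam t
        = 3 ^ ((∑ t ∈ (Finset.range n).filter (fun t => c t = 1), lam t) +
               (∑ t ∈ (Finset.range n).filter (fun t => c t = e - 1), lam t)) *
          4 ^ (∑ j ∈ Finset.Icc 2 (e - 2),
                ∑ t ∈ (Finset.range n).filter (fun t => c t = j), lam t) := by
      rw [← Finset.prod_filter_mul_prod_filter_not (Finset.range n)
        (fun t => c t = 1 ∨ c t = e - 1)]
      congr 1
      · -- colour 1 or e-1 : three basis elements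
        have hA : ∏ t ∈ (Finset.range n).filter (fun t => c t = 1 ∨ c t = e - 1),
            (allowedT e (c t)).card ^ lam t
            = ∏ t ∈ (Finset.range n).filter (fun t => c t = 1 ∨ c t = e - 1),
              3 ^ lam t := by
          apply Finset.prod_congr rfl
          intro t ht
          simp only [Finset.mem_filter, Finset.mem_range] at ht
          rcases ht.2 with h1 | h1
          · rw [h1, card_allowedT_one (by omega)]
          · rw [h1, card_allowedT_top (by omega)]
        rw [hA, Finset.prod_pow_eq_pow_sum]
        congr 1
        rw [Finset.filter_or]
        rw [Finset.sum_union]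
        exact Finset.disjoint_filter.2 (fun t _ h1 h2 => by omega)
      · have hB : ∏ t ∈ (Finset.range n).filter (fun t => ¬(c t = 1 ∨ c t = e - 1)),
            (allowedT e (c t)).card ^ lam t
            = ∏ t ∈ (Finset.range n).filter (fun t => ¬(c t = 1 ∨ c t = e - 1)),
              4 ^ lam t := by
          apply Finset.prod_congr rfl
          intro t ht
          simp only [Finset.mem_filter, Finset.mem_range] at ht
          have hct := hc t ht.1
          have h2 : 2 ≤ c t := by omega
          have h3 : c t + 1 ≤ e - 1 := by omega
          rw [card_allowedT_mid h2 h3]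
        rw [hB, Finset.prod_pow_eq_pow_sum]
        congr 1
        rw [← Finset.sum_fiberwise_of_maps_to (g := c) (t := Finset.Icc 2 (e - 2))
          (fun t ht => by
            simp only [Finset.mem_filter, Finset.mem_range] at ht
            have hct := hc t ht.1
            simp only [Finset.mem_Icc]
            omega) lam]
        apply Finset.sum_congr rfl
        intro j hj
        simp only [Finset.mem_Icc] at hj
        apply Finset.sum_congr _ (fun _ _ => rfl)
        ext t
        simp only [Finset.mem_filter, Finset.mem_range]
        constructor
        · rintro ⟨⟨h1, _⟩, h2⟩
          exact ⟨h1, h2⟩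
        · rintro ⟨h1, h2⟩
          exact ⟨⟨h1, by omega⟩, h2⟩
    rw [key]
    ring
  · intro he2
    subst he2
    rw [LinearEquiv.finrank_eq (theEquiv (e := 2) (n := n) (d := d) (lam := lam) (c := c)),
      Module.finrank_finsupp_self, card_BT hn hlam']
    have hfilter : (Finset.range n).filter (fun t => c t = 1) = Finset.range n :=
      Finset.filter_true_of_mem (fun t ht => by
        have := hc t (Finset.mem_range.1 ht); omega)
    rw [hfilter]
    have hprod : ∏ t ∈ Finset.range n, (allowedT 2 (c t)).card ^ lam t
        = ∏ t ∈ Finset.range n, 2 ^ lam t := by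
      apply Finset.prod_congr rfl
      intro t ht
      have h1 := hc t (Finset.mem_range.1 ht)
      have h2 : c t = 1 := by omega
      rw [h2, card_allowedT_e2]
    rw [hprod, Finset.prod_pow_eq_pow_sum]
    exact Nat.mul_comm _ _
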